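/- Fix an integer m ≥ n and let J_m ⊆ P be the ideal generated by the elements t_k for all k > m together with (x_i|t)^m = (x_i+t_1)⋯(x_i+t_m) for i = 1, …, n. Then the intersection of J_m with the R-module of skew-symmetric polynomials equals the R-span of the set consisting of all elements t_k · a_ν with k > m and ν strictly decreasing in ℕ^n, together with all elements a_ν with ν strictly decreasing and ν_1 ≥ m. -/

import Mathlib

/- R = ℤ[t₁, t₂, …] with tₖ encoded as `MvPolynomial.X (k-1)`, i.e. 0-indexed;
   P = R[x₁, …, xₙ] = MvPolynomial (Fin n) R. -/

open MvPolynomial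

noncomputable section

abbrev R : Type := MvPolynomial ℕ ℤ

abbrev P (n : ℕ) : Type := MvPolynomial (Fin n) R

/-- The double monomial `(x_i | t)^k = (x_i + t₁) ⋯ (x_i + tₖ)`. -/
def dm (n : ℕ) (i : Fin n) (k : ℕ) : P n :=
  ∏ j ∈ Finset.range k, (X i + C (MvPolynomial.X j : R))

/-- `a_ν = Σ_{σ ∈ S_n} sgn(σ) Π_i (x_{σ(i)} | t)^{ν_i}`. -/
def aPoly (n : ℕ) (ν : Fin n → ℕ) : P n :=
  ∑ σ : Equiv.Perm (Fin n), (Equiv.Perm.sign σ : ℤ) • ∏ i : Fin n, dm n (σ i) (ν i)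

/-- A polynomial `f ∈ P` is skew-symmetric if `σ · f = sgn(σ) f` for every
permutation `σ` of the variables. -/
def IsSkew (n : ℕ) (f : P n) : Prop :=
  ∀ σ : Equiv.Perm (Fin n), rename σ f = (Equiv.Perm.sign σ : ℤ) • f

/-- The ideal `J_m ⊆ P` generated by the `t_k` for `k > m` (encoded 0-indexed: the
constants `MvPolynomial.X k` for `k ≥ m`) and the `(x_i|t)^m` for `i = 1, …, n`. -/
def Jm (n m : ℕ) : Ideal (P n) :=
  Ideal.span ({p : P n | ∃ k : ℕ, m ≤ k ∧ p = C (MvPolynomial.X k : R)} ∪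
    {p : P n | ∃ i : Fin n, p = dm n i m})

lemma dm_succ (n : ℕ) (i : Fin n) (k : ℕ) :
    dm n i (k+1) = dm n i k * (X i + C (MvPolynomial.X k : R)) := by
  simp [dm, Finset.prod_range_succ]

lemma rename_dm (n : ℕ) (σ : Equiv.Perm (Fin n)) (i : Fin n) (k : ℕ) :
    rename σ (dm n i k) = dm n (σ i) k := by
  simp [dm, map_prod]

lemma support_dm (n : ℕ) (i : Fin n) (k : ℕ) :
    ∀ β ∈ (dm n i k).support, β = Finsupp.single i (β i) ∧ β i ≤ k := by
  classical
  induction k with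
  | zero =>
    intro β hβ
    have : dm n i 0 = 1 := by simp [dm]
    rw [this] at hβ
    have hc := MvPolynomial.mem_support_iff.mp hβ
    rw [MvPolynomial.coeff_one] at hc
    have hβ0 : β = 0 := by
      by_contra h; exact hc (by simp [Ne.symm h])
    subst hβ0; simp
  | succ k ih =>
    intro β hβ
    rw [dm_succ, mul_add] at hβ
    have hβ' := MvPolynomial.support_add hβ
    rcases Finset.mem_union.mp hβ' with h | h
    · rw [MvPolynomial.support_mul_X] at h
      simp only [Finset.mem_map, Function.Embedding.coeFn_mk] at h
      obtain ⟨γ, hγ, hβγ⟩ := h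
      rw [addRightEmbedding_apply] at hβγ
      subst hβγ
      obtain ⟨h1, h2⟩ := ih γ hγ
      constructor
      · rw [Finsupp.add_apply, Finsupp.single_apply, if_pos rfl]
        nth_rewrite 1 [h1]
        rw [← Finsupp.single_add]
      · simp [Finsupp.single_apply]; omega
    · have : β ∈ (dm n i k).support := by
        have hc : MvPolynomial.coeff β (dm n i k * C (MvPolynomial.X k : R)) ≠ 0 :=
          MvPolynomial.mem_support_iff.mp h
        rw [mul_comm, MvPolynomial.coeff_C_mul] at hc
        exact MvPolynomial.mem_support_iff.mpr fun hz => hc (by rw [hz, mul_zero])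
      obtain ⟨h1, h2⟩ := ih β this
      exact ⟨h1, h2.trans (Nat.le_succ k)⟩

lemma coeff_single_dm (n : ℕ) (i : Fin n) (k : ℕ) :
    MvPolynomial.coeff (Finsupp.single i k) (dm n i k) = 1 := by
  induction k with
  | zero => simp [dm]
  | succ k ih =>
    rw [dm_succ, mul_add]
    rw [MvPolynomial.coeff_add]
    have h1 : MvPolynomial.coeff (Finsupp.single i (k+1)) (dm n i k * X i) = 1 := by
      have : (Finsupp.single i (k+1)) = Finsupp.single i k + Finsupp.single i 1 := by
        rw [← Finsupp.single_add]
      rw [this, MvPolynomial.coeff_mul_X, ih]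
    have h2 : MvPolynomial.coeff (Finsupp.single i (k+1)) (dm n i k * C (MvPolynomial.X k : R)) = 0 := by
      rw [mul_comm, MvPolynomial.coeff_C_mul]
      have : MvPolynomial.coeff (Finsupp.single i (k+1)) (dm n i k) = 0 := by
        by_contra hc
        have := support_dm n i k _ (MvPolynomial.mem_support_iff.mpr hc)
        simp [Finsupp.single_apply] at this
      rw [this, mul_zero]
    rw [h1, h2, add_zero]

lemma mem_support_one (n : ℕ) {β : Fin n →₀ ℕ} (hβ : β ∈ (1 : P n).support) : β = 0 := by
  have hc := MvPolynomial.mem_support_iff.mp hβ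
  rw [MvPolynomial.coeff_one] at hc
  by_contra h; exact hc (by simp [Ne.symm h])

lemma support_prod_dm (n : ℕ) (σ : Equiv.Perm (Fin n)) (ν : Fin n → ℕ) (s : Finset (Fin n)) :
    ∀ β ∈ (∏ i ∈ s, dm n (σ i) (ν i)).support,
      (∀ i ∈ s, β (σ i) ≤ ν i) ∧ ∀ j, j ∉ s.image σ → β j = 0 := by
  classical
  induction s using Finset.induction_on with
  | empty =>
    intro β hβ
    rw [Finset.prod_empty] at hβ
    have := mem_support_one n hβ
    subst this; simp
  | insert _ _ ha =>
    rename_i a s ih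
    intro β hβ
    rw [Finset.prod_insert ha] at hβ
    obtain ⟨b, hb, c, hc, rfl⟩ := Finset.mem_add.mp (MvPolynomial.support_mul _ _ hβ)
    obtain ⟨hb1, hb2⟩ := support_dm n (σ a) (ν a) b hb
    obtain ⟨hc1, hc2⟩ := ih c hc
    have hca : c (σ a) = 0 := hc2 _ (by
      intro hmem
      obtain ⟨i, hi, hie⟩ := Finset.mem_image.mp hmem
      exact ha ((σ.injective hie) ▸ hi))
    constructor
    · intro i hi
      rcases Finset.mem_insert.mp hi with rfl | hi
      · rw [Finsupp.add_apply, hca, add_zero]; exact hb2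
      · rw [Finsupp.add_apply]
        have hba : b (σ i) = 0 := by
          rw [hb1, Finsupp.single_apply, if_neg]
          exact fun h => (ne_of_mem_of_not_mem hi ha) (σ.injective h).symm
        rw [hba, zero_add]; exact hc1 i hi
    · intro j hj
      rw [Finset.image_insert] at hj
      rw [Finsupp.add_apply]
      have h1 : b j = 0 := by
        have hja : ¬ (σ a = j) := fun h =>
          hj (h ▸ Finset.mem_insert_self (σ a) (Finset.image σ s))
        rw [hb1, Finsupp.single_apply, if_neg]
        intro h; exact hja (by rw [h])
      have h2 : c j = 0 := hc2 j (fun h => hj (Finset.mem_insert_of_mem h))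
      rw [h1, h2]

lemma coeff_sum_single_prod_dm (n : ℕ) (σ : Equiv.Perm (Fin n)) (ν : Fin n → ℕ)
    (s : Finset (Fin n)) :
    MvPolynomial.coeff (∑ i ∈ s, Finsupp.single (σ i) (ν i)) (∏ i ∈ s, dm n (σ i) (ν i)) = 1 := by
  classical
  induction s using Finset.induction_on with
  | empty => simp
  | insert _ _ ha =>
    rename_i a s ih
    rw [Finset.prod_insert ha, Finset.sum_insert ha, MvPolynomial.coeff_mul]
    have hrest : (∑ i ∈ s, Finsupp.single (σ i) (ν i)) (σ a) = 0 := by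
      rw [Finsupp.finset_sum_apply]
      apply Finset.sum_eq_zero
      intro i hi
      rw [Finsupp.single_apply, if_neg]
      exact fun h => ha ((σ.injective h) ▸ hi)
    rw [Finset.sum_eq_single_of_mem
        (⟨Finsupp.single (σ a) (ν a), ∑ i ∈ s, Finsupp.single (σ i) (ν i)⟩ :
          (Fin n →₀ ℕ) × (Fin n →₀ ℕ))]
    · rw [coeff_single_dm, ih, one_mul]
    · rw [Finset.HasAntidiagonal.mem_antidiagonal]
    · rintro ⟨b, c⟩ hmem hne
      by_contra h
      have hb : b ∈ (dm n (σ a) (ν a)).support :=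
        MvPolynomial.mem_support_iff.mpr (fun hz => h (by rw [hz, zero_mul]))
      have hc : c ∈ (∏ i ∈ s, dm n (σ i) (ν i)).support :=
        MvPolynomial.mem_support_iff.mpr (fun hz => h (by rw [hz, mul_zero]))
      obtain ⟨hb1, hb2⟩ := support_dm n (σ a) (ν a) b hb
      have hca : c (σ a) = 0 := (support_prod_dm n σ ν s c hc).2 _ (by
        intro hmem
        obtain ⟨i, hi, hie⟩ := Finset.mem_image.mp hmem
        exact ha ((σ.injective hie) ▸ hi))
      have hsum := Finset.HasAntidiagonal.mem_antidiagonal.mp hmem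
      have hval : b (σ a) = ν a := by
        have := congrArg (fun (γ : Fin n →₀ ℕ) => γ (σ a)) hsum
        simp only [Finsupp.add_apply, hca, add_zero, Finsupp.single_apply, if_pos rfl] at this
        rw [hrest, add_zero] at this
        exact this
      have hbeq : b = Finsupp.single (σ a) (ν a) := by rw [hb1, hval]
      have hceq : c = ∑ i ∈ s, Finsupp.single (σ i) (ν i) := by
        have : Finsupp.single (σ a) (ν a) + c
            = Finsupp.single (σ a) (ν a) + ∑ i ∈ s, Finsupp.single (σ i) (ν i) := by
          rw [← hbeq]; exact hbeq ▸ hsum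
        exact add_left_cancel this
      exact hne (by rw [hbeq, hceq])

def eff (n : ℕ) (ν : Fin n → ℕ) : Fin n →₀ ℕ := Finsupp.equivFunOnFinite.symm ν

@[simp] lemma eff_apply (n : ℕ) (ν : Fin n → ℕ) (i : Fin n) : eff n ν i = ν i := rfl

lemma eff_eq_sum (n : ℕ) (ν : Fin n → ℕ) : eff n ν = ∑ i, Finsupp.single i (ν i) := by
  ext j
  rw [Finsupp.finset_sum_apply, eff_apply]
  rw [Finset.sum_congr rfl (fun i _ => Finsupp.single_apply)]
  rw [Finset.sum_ite_eq' Finset.univ j ν]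
  simp

lemma perm_eq_one_of_le {n : ℕ} {ν : Fin n → ℕ} (hν : StrictAnti ν)
    (σ : Equiv.Perm (Fin n)) (hle : ∀ i, ν (σ i) ≤ ν i) : σ = 1 := by
  have hge : ∀ i, i ≤ σ i := by
    intro i
    by_contra h
    push_neg at h
    exact absurd (hν h) (not_lt.mpr (hle i))
  have hsum : ∑ i : Fin n, ((σ i : ℕ)) = ∑ i : Fin n, (i : ℕ) :=
    Equiv.sum_comp σ (fun i => (i : ℕ))
  have key := (Finset.sum_eq_sum_iff_of_le (fun i _ => (Fin.le_def.mp (hge i)))).mp hsum.symm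
  ext i
  exact congrArg Fin.val (Fin.le_antisymm (hge i) (Fin.le_def.mpr (key i (Finset.mem_univ i)).ge)).symm

lemma coeff_eff_prod_dm_eq_zero {n : ℕ} {ν : Fin n → ℕ} (hν : StrictAnti ν)
    {σ : Equiv.Perm (Fin n)} (hσ : σ ≠ 1) :
    MvPolynomial.coeff (eff n ν) (∏ i : Fin n, dm n (σ i) (ν i)) = 0 := by
  by_contra h
  have hmem := MvPolynomial.mem_support_iff.mpr h
  have hb := (support_prod_dm n σ ν Finset.univ _ hmem).1
  exact hσ (perm_eq_one_of_le hν σ (fun i => by simpa using hb i (Finset.mem_univ i)))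

lemma coeff_eff_aPoly {n : ℕ} {ν : Fin n → ℕ} (hν : StrictAnti ν) :
    MvPolynomial.coeff (eff n ν) (aPoly n ν) = 1 := by
  rw [aPoly, MvPolynomial.coeff_sum]
  rw [Finset.sum_eq_single_of_mem (1 : Equiv.Perm (Fin n)) (Finset.mem_univ _)]
  · rw [MvPolynomial.coeff_smul]
    have h1 : MvPolynomial.coeff (eff n ν) (∏ i : Fin n, dm n ((1 : Equiv.Perm (Fin n)) i) (ν i)) = 1 := by
      rw [eff_eq_sum]
      simpa using coeff_sum_single_prod_dm n 1 ν Finset.univ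
    rw [h1]
    simp
  · intro σ _ hσ
    rw [MvPolynomial.coeff_smul, coeff_eff_prod_dm_eq_zero hν hσ, smul_zero]

lemma lex_dominance {n : ℕ} {ν : Fin n → ℕ} (hν : StrictAnti ν) (σ : Equiv.Perm (Fin n))
    (β : Fin n →₀ ℕ) (hβ : ∀ i, β (σ i) ≤ ν i) : toLex β ≤ toLex (eff n ν) := by
  rcases eq_or_ne β (eff n ν) with rfl | hne
  · exact le_refl _
  apply le_of_lt
  classical
  have hTne : (Finset.univ.filter (fun j => β j ≠ ν j)).Nonempty := by
    by_contra h
    rw [Finset.not_nonempty_iff_eq_empty, Finset.filter_eq_empty_iff] at h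
    exact hne (Finsupp.ext (fun j => by
      have := h (Finset.mem_univ j); simpa using this))
  set T := Finset.univ.filter (fun j => β j ≠ ν j) with hT
  set j₀ := T.min' hTne with hj₀def
  have hj₀ : β j₀ ≠ ν j₀ := (Finset.mem_filter.mp (T.min'_mem hTne)).2
  have hlt : ∀ j, j < j₀ → β j = ν j := by
    intro j hj
    by_contra h
    exact absurd (T.min'_le j (by rw [hT]; simp [h])) (not_le.mpr hj)
  have hj₀τ : j₀ ≤ σ⁻¹ j₀ := by
    by_contra h
    push_neg at h
    set T0 := Finset.univ.filter (fun j => j < j₀) with hT0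
    have hmap : Finset.image (fun j => σ⁻¹ j) T0 ⊆ T0 := by
      intro x hx
      obtain ⟨j, hj, rfl⟩ := Finset.mem_image.mp hx
      rw [hT0, Finset.mem_filter] at hj ⊢
      refine ⟨Finset.mem_univ _, ?_⟩
      have h1 : ν j ≤ ν (σ⁻¹ j) := by
        have := hβ (σ⁻¹ j)
        rw [← Equiv.Perm.mul_apply, mul_inv_cancel, Equiv.Perm.one_apply] at this
        rw [← hlt j hj.2]
        exact this
      have h2 : σ⁻¹ j ≤ j := by
        by_contra h'
        push_neg at h'
        exact absurd (hν h') (not_lt.mpr h1)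
      exact lt_of_le_of_lt h2 hj.2
    have hcard : (Finset.image (fun j => σ⁻¹ j) T0).card = T0.card :=
      Finset.card_image_of_injective _ (σ⁻¹ : Equiv.Perm (Fin n)).injective
    have heq : Finset.image (fun j => σ⁻¹ j) T0 = T0 :=
      Finset.eq_of_subset_of_card_le hmap (le_of_eq hcard.symm)
    have hmem : σ⁻¹ j₀ ∈ T0 := by rw [hT0]; simpa using h
    rw [← heq] at hmem
    obtain ⟨j, hj, hjj⟩ := Finset.mem_image.mp hmem
    have hjeq : j = j₀ := (σ⁻¹ : Equiv.Perm (Fin n)).injective hjj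
    rw [hjeq] at hj
    rw [hT0, Finset.mem_filter] at hj
    exact absurd hj.2 (lt_irrefl j₀)
  have hb : β j₀ < ν j₀ := by
    have h1 : β j₀ ≤ ν (σ⁻¹ j₀) := by
      have := hβ (σ⁻¹ j₀)
      rwa [← Equiv.Perm.mul_apply, mul_inv_cancel, Equiv.Perm.one_apply] at this
    have h2 : ν (σ⁻¹ j₀) ≤ ν j₀ := hν.antitone hj₀τ
    exact lt_of_le_of_ne (h1.trans h2) hj₀
  exact Finsupp.Lex.lt_iff.mpr ⟨j₀, fun j hj => hlt j hj, hb⟩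

lemma support_aPoly_exists_perm {n : ℕ} (ν : Fin n → ℕ) :
    ∀ β ∈ (aPoly n ν).support, ∃ σ : Equiv.Perm (Fin n), ∀ i, β (σ i) ≤ ν i := by
  intro β hβ
  have hc := MvPolynomial.mem_support_iff.mp hβ
  rw [aPoly, MvPolynomial.coeff_sum] at hc
  obtain ⟨σ, -, hσ⟩ := Finset.exists_ne_zero_of_sum_ne_zero hc
  rw [MvPolynomial.coeff_smul] at hσ
  have : MvPolynomial.coeff β (∏ i : Fin n, dm n (σ i) (ν i)) ≠ 0 := by
    intro h; rw [h, smul_zero] at hσ; exact hσ rfl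
  exact ⟨σ, fun i => (support_prod_dm n σ ν Finset.univ β
    (MvPolynomial.mem_support_iff.mpr this)).1 i (Finset.mem_univ i)⟩

lemma support_aPoly_le {n : ℕ} {ν : Fin n → ℕ} (hν : StrictAnti ν) :
    ∀ β ∈ (aPoly n ν).support, toLex β ≤ toLex (eff n ν) := by
  intro β hβ
  obtain ⟨σ, hσ⟩ := support_aPoly_exists_perm ν β hβ
  exact lex_dominance hν σ β hσ

lemma support_aPoly_entry_le {n : ℕ} {ν : Fin n → ℕ} {B : ℕ} (hB : ∀ i, ν i ≤ B) :
    ∀ β ∈ (aPoly n ν).support, ∀ j, β j ≤ B := by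
  intro β hβ j
  obtain ⟨σ, hσ⟩ := support_aPoly_exists_perm ν β hβ
  have := hσ (σ⁻¹ j)
  rw [← Equiv.Perm.mul_apply, mul_inv_cancel, Equiv.Perm.one_apply] at this
  exact this.trans (hB _)

lemma rename_dm' (n : ℕ) (σ : Equiv.Perm (Fin n)) (i : Fin n) (k : ℕ) :
    rename (σ : Fin n → Fin n) (dm n i k) = dm n (σ i) k := rename_dm n σ i k

lemma isSkew_aPoly (n : ℕ) (ν : Fin n → ℕ) : IsSkew n (aPoly n ν) := by
  intro σ
  rw [aPoly, map_sum]
  have hterm : ∀ τ : Equiv.Perm (Fin n),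
      rename (σ : Fin n → Fin n) ((Equiv.Perm.sign τ : ℤ) • ∏ i : Fin n, dm n (τ i) (ν i))
        = (Equiv.Perm.sign τ : ℤ) • ∏ i : Fin n, dm n ((σ * τ) i) (ν i) := by
    intro τ
    rw [map_zsmul, map_prod]
    simp_rw [rename_dm]
    rfl
  rw [Finset.sum_congr rfl (fun τ _ => hterm τ)]
  have hs2 : (Equiv.Perm.sign σ : ℤ) * (Equiv.Perm.sign σ : ℤ) = 1 := by
    rw [← Units.val_mul, Int.units_mul_self, Units.val_one]
  have hmul : ∀ τ : Equiv.Perm (Fin n),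
      ((Equiv.Perm.sign (σ * τ) : ℤ)) = (Equiv.Perm.sign σ : ℤ) * (Equiv.Perm.sign τ : ℤ) := by
    intro τ; rw [Equiv.Perm.sign_mul, Units.val_mul]
  set G : Equiv.Perm (Fin n) → P n := fun τ =>
    ((Equiv.Perm.sign σ : ℤ) * (Equiv.Perm.sign τ : ℤ)) • ∏ i : Fin n, dm n (τ i) (ν i)
    with hG
  calc ∑ τ : Equiv.Perm (Fin n),
        (Equiv.Perm.sign τ : ℤ) • ∏ i : Fin n, dm n ((σ * τ) i) (ν i)
      = ∑ τ : Equiv.Perm (Fin n), G (Equiv.mulLeft σ τ) := by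
        apply Finset.sum_congr rfl
        intro τ _
        rw [hG]
        simp only [Equiv.coe_mulLeft]
        rw [hmul τ, ← mul_assoc, hs2, one_mul]
    _ = ∑ τ : Equiv.Perm (Fin n), G τ := Equiv.sum_comp (Equiv.mulLeft σ) G
    _ = (Equiv.Perm.sign σ : ℤ) • ∑ τ : Equiv.Perm (Fin n),
          (Equiv.Perm.sign τ : ℤ) • ∏ i : Fin n, dm n (τ i) (ν i) := by
        rw [Finset.smul_sum]
        apply Finset.sum_congr rfl
        intro τ _
        rw [hG, smul_smul]

lemma isSkew_smul {n : ℕ} {f : P n} (hf : IsSkew n f) (r : R) : IsSkew n (r • f) := by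
  intro σ
  rw [map_smul, hf σ, smul_comm]

lemma isSkew_sub {n : ℕ} {f g : P n} (hf : IsSkew n f) (hg : IsSkew n g) :
    IsSkew n (f - g) := by
  intro σ
  rw [map_sub, hf σ, hg σ, smul_sub]

lemma isSkew_zero (n : ℕ) : IsSkew n (0 : P n) := by
  intro σ; simp

lemma isSkew_add {n : ℕ} {f g : P n} (hf : IsSkew n f) (hg : IsSkew n g) :
    IsSkew n (f + g) := by
  intro σ
  rw [map_add, hf σ, hg σ, smul_add]

lemma coeff_mapDomain_skew {n : ℕ} {f : P n} (hf : IsSkew n f) (σ : Equiv.Perm (Fin n))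
    (β : Fin n →₀ ℕ) :
    MvPolynomial.coeff β f
      = (Equiv.Perm.sign σ : ℤ) • MvPolynomial.coeff (β.mapDomain σ) f := by
  have h := MvPolynomial.coeff_rename_mapDomain (σ : Fin n → Fin n) σ.injective f β
  rw [hf σ, MvPolynomial.coeff_smul] at h
  exact h.symm

lemma mapDomain_swap_mem_support {n : ℕ} {f : P n} (hf : IsSkew n f) {β : Fin n →₀ ℕ}
    (hβ : β ∈ f.support) (σ : Equiv.Perm (Fin n)) : β.mapDomain σ ∈ f.support := by
  rw [MvPolynomial.mem_support_iff] at hβ ⊢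
  intro h
  rw [coeff_mapDomain_skew hf σ β, h, smul_zero] at hβ
  exact hβ rfl

lemma skew_support_ne {n : ℕ} {f : P n} (hf : IsSkew n f) {β : Fin n →₀ ℕ}
    (hβ : β ∈ f.support) {i j : Fin n} (hij : i ≠ j) : β i ≠ β j := by
  intro he
  have hmd : β.mapDomain (Equiv.swap i j) = β := by
    ext a
    rw [Finsupp.mapDomain_equiv_apply, Equiv.symm_swap]
    rcases eq_or_ne a i with rfl | hai
    · rw [Equiv.swap_apply_left, he]
    rcases eq_or_ne a j with rfl | haj
    · rw [Equiv.swap_apply_right, he]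
    · rw [Equiv.swap_apply_of_ne_of_ne hai haj]
  have := coeff_mapDomain_skew hf (Equiv.swap i j) β
  rw [hmd, Equiv.Perm.sign_swap hij] at this
  have h2 : (2 : R) * MvPolynomial.coeff β f = 0 := by
    have : MvPolynomial.coeff β f = - MvPolynomial.coeff β f := by
      simpa using this
    linear_combination this
  rcases mul_eq_zero.mp h2 with h | h
  · exact absurd h (by norm_num)
  · exact (MvPolynomial.mem_support_iff.mp hβ) h

def Mf (n : ℕ) (f : P n) : WithBot (Lex (Fin n →₀ ℕ)) := (f.support.image toLex).max

lemma expansion_aux (n : ℕ) :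
    ∀ (L : WithBot (Lex (Fin n →₀ ℕ))) (f : P n), Mf n f = L → IsSkew n f →
    ∃ (s : Finset (Fin n → ℕ)) (c : (Fin n → ℕ) → R),
      (∀ ν ∈ s, StrictAnti ν) ∧
      (∀ ν ∈ s, ((toLex (eff n ν) : Lex (Fin n →₀ ℕ)) : WithBot (Lex (Fin n →₀ ℕ))) ≤ Mf n f) ∧
      f = ∑ ν ∈ s, c ν • aPoly n ν := by
  intro L
  induction L using WellFoundedLT.induction with
  | _ L IH =>
  intro f hL hf
  rcases eq_or_ne f 0 with rfl | hf0
  · exact ⟨∅, 0, by simp, by simp, by simp⟩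
  classical
  have hsupp : f.support.Nonempty := MvPolynomial.support_nonempty.mpr hf0
  have hIm : (f.support.image toLex).Nonempty := hsupp.image _
  set Lstar := (f.support.image toLex).max' hIm with hLstar
  have hMf : Mf n f = (Lstar : WithBot (Lex (Fin n →₀ ℕ))) := (Finset.coe_max' hIm).symm
  obtain ⟨βs, hβsmem, hβseq⟩ := Finset.mem_image.mp ((f.support.image toLex).max'_mem hIm)
  have hEq : toLex βs = Lstar := by rw [hLstar]; exact hβseq
  have hle : ∀ β ∈ f.support, toLex β ≤ Lstar := fun β hβ =>
    Finset.le_max' _ _ (Finset.mem_image_of_mem _ hβ)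
  set ν : Fin n → ℕ := (βs : Fin n → ℕ) with hν
  have heff : eff n ν = βs := Finsupp.equivFunOnFinite_symm_coe βs
  have hanti : StrictAnti ν := by
    intro i j hij
    rcases lt_trichotomy (βs i) (βs j) with h | h | h
    · exfalso
      set γ := βs.mapDomain (Equiv.swap i j) with hγ
      have hγmem : γ ∈ f.support := mapDomain_swap_mem_support hf hβsmem _
      have hγa : ∀ a, γ a = βs (Equiv.swap i j a) := fun a => by
        rw [hγ, Finsupp.mapDomain_equiv_apply, Equiv.symm_swap]
      have hlex : toLex βs < toLex γ := by
        refine Finsupp.Lex.lt_iff.mpr ⟨i, ?_, ?_⟩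
        · intro a ha
          show βs a = γ a
          rw [hγa, Equiv.swap_apply_of_ne_of_ne (ne_of_lt ha) (ne_of_lt (ha.trans hij))]
        · show βs i < γ i
          rw [hγa, Equiv.swap_apply_left]
          exact h
      have hged := hle γ hγmem
      have hcon := lt_of_lt_of_le hlex hged
      rw [hEq] at hcon
      exact lt_irrefl _ hcon
    · exact absurd h (skew_support_ne hf hβsmem (ne_of_lt hij))
    · exact h
  set c := MvPolynomial.coeff βs f with hc
  set f' := f - c • aPoly n ν with hf'
  have hf'skew : IsSkew n f' := isSkew_sub hf (isSkew_smul (isSkew_aPoly n ν) c)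
  have haP : MvPolynomial.coeff βs (aPoly n ν) = 1 := by
    rw [← heff]; exact coeff_eff_aPoly hanti
  have hcoefβs : MvPolynomial.coeff βs f' = 0 := by
    rw [hf', MvPolynomial.coeff_sub, MvPolynomial.coeff_smul, haP]
    simp [hc]
  have hsupp' : ∀ β ∈ f'.support, toLex β ≤ Lstar ∧ β ≠ βs := by
    intro β hβ
    have hβne : MvPolynomial.coeff β f' ≠ 0 := MvPolynomial.mem_support_iff.mp hβ
    constructor
    · rcases eq_or_ne (MvPolynomial.coeff β f) 0 with h0 | h0
      · have haβ : MvPolynomial.coeff β (aPoly n ν) ≠ 0 := by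
          intro hz
          rw [hf', MvPolynomial.coeff_sub, h0, MvPolynomial.coeff_smul, hz] at hβne
          simp at hβne
        have hleβ := support_aPoly_le hanti β (MvPolynomial.mem_support_iff.mpr haβ)
        rw [heff] at hleβ
        rw [← hEq]
        exact hleβ
      · exact hle β (MvPolynomial.mem_support_iff.mpr h0)
    · intro he
      rw [he] at hβne
      exact hβne hcoefβs
  have hMf' : Mf n f' < (Lstar : WithBot (Lex (Fin n →₀ ℕ))) := by
    rw [Mf]
    rcases (f'.support.image toLex).eq_empty_or_nonempty with he | hne'
    · rw [he, Finset.max_empty]; exact WithBot.bot_lt_coe _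
    · rw [← Finset.coe_max' hne', WithBot.coe_lt_coe]
      obtain ⟨β, hβmem, hβeq⟩ := Finset.mem_image.mp ((f'.support.image toLex).max'_mem hne')
      rw [← hβeq]
      obtain ⟨h1, h2⟩ := hsupp' β hβmem
      exact lt_of_le_of_ne h1 (fun hcon => h2 (toLex.injective (hcon.trans hEq.symm)))
  have hltL : Mf n f' < L := by rw [← hL, hMf]; exact hMf'
  obtain ⟨s', c', hs1, hs2, hs3⟩ := IH (Mf n f') hltL f' rfl hf'skew
  have hνnots' : ν ∉ s' := by
    intro hmem
    have hb := hs2 ν hmem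
    rw [heff] at hb
    have hcon := lt_of_le_of_lt hb hMf'
    rw [hEq] at hcon
    exact lt_irrefl _ hcon
  refine ⟨insert ν s', Function.update c' ν c, ?_, ?_, ?_⟩
  · intro ν' hν'
    rcases Finset.mem_insert.mp hν' with h | h
    · rw [h]; exact hanti
    · exact hs1 ν' h
  · intro ν' hν'
    rcases Finset.mem_insert.mp hν' with h | h
    · rw [h, heff, hMf, hEq]
    · exact (hs2 ν' h).trans (le_of_lt (by rw [hMf]; exact hMf'))
  · rw [Finset.sum_insert hνnots', Function.update_self]
    have hsum : ∑ ν' ∈ s', Function.update c' ν c ν' • aPoly n ν'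
        = ∑ ν' ∈ s', c' ν' • aPoly n ν' := by
      apply Finset.sum_congr rfl
      intro ν' h
      rw [Function.update_of_ne (fun (hcc : ν' = ν) => hνnots' (hcc ▸ h))]
    rw [hsum, ← hs3, hf']
    ring

lemma eff_injective (n : ℕ) : Function.Injective (eff n) :=
  Finsupp.equivFunOnFinite.symm.injective

lemma aPoly_indep {n : ℕ} (c : (Fin n → ℕ) → R) :
    ∀ (s : Finset (Fin n → ℕ)), (∀ ν ∈ s, StrictAnti ν) →
    (∑ ν ∈ s, c ν • aPoly n ν) = 0 → ∀ ν ∈ s, c ν = 0 := by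
  classical
  intro s
  induction s using Finset.strongInduction with
  | _ s ihs =>
  intro hs hsum ν₁ hν₁
  have hne : s.Nonempty := ⟨ν₁, hν₁⟩
  have hIm : (s.image (fun ν => toLex (eff n ν))).Nonempty := hne.image _
  obtain ⟨νm, hνmmem, hνmeq⟩ :=
    Finset.mem_image.mp ((s.image (fun ν => toLex (eff n ν))).max'_mem hIm)
  have hmax : ∀ ν ∈ s, toLex (eff n ν) ≤ toLex (eff n νm) := by
    intro ν hν
    rw [hνmeq]
    exact Finset.le_max' (s.image fun ν => toLex (eff n ν)) _
      (Finset.mem_image_of_mem _ hν)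
  have hkey : MvPolynomial.coeff (eff n νm) (∑ ν ∈ s, c ν • aPoly n ν) = c νm := by
    rw [MvPolynomial.coeff_sum]
    rw [Finset.sum_eq_single_of_mem νm hνmmem]
    · rw [MvPolynomial.coeff_smul, coeff_eff_aPoly (hs νm hνmmem), smul_eq_mul, mul_one]
    · intro ν hν hνne
      rw [MvPolynomial.coeff_smul]
      have hz : MvPolynomial.coeff (eff n νm) (aPoly n ν) = 0 := by
        by_contra hnz
        have hlex := support_aPoly_le (hs ν hν) _ (MvPolynomial.mem_support_iff.mpr hnz)
        have heq := le_antisymm hlex (hmax ν hν)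
        exact hνne (eff_injective n (toLex.injective heq)).symm
      rw [hz, smul_zero]
  rw [hsum, MvPolynomial.coeff_zero] at hkey
  have hcm : c νm = 0 := hkey.symm
  have hrest : ∑ ν ∈ s.erase νm, c ν • aPoly n ν = 0 := by
    have h2 : c νm • aPoly n νm + ∑ x ∈ s.erase νm, c x • aPoly n x = 0 := by
      rw [Finset.add_sum_erase s (fun ν => c ν • aPoly n ν) hνmmem]
      exact hsum
    rw [hcm, zero_smul, zero_add] at h2
    exact h2
  rcases eq_or_ne ν₁ νm with rfl | hne₁
  · exact hcm
  · exact ihs (s.erase νm) (Finset.erase_ssubset hνmmem)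
      (fun ν hν => hs ν (Finset.mem_of_mem_erase hν)) hrest ν₁
      (Finset.mem_erase.mpr ⟨hne₁, hν₁⟩)

def pim (m : ℕ) : R →+* R :=
  MvPolynomial.eval₂Hom (MvPolynomial.C : ℤ →+* R)
    (fun k => if k < m then MvPolynomial.X k else 0)

lemma pim_X (m k : ℕ) : pim m (MvPolynomial.X k)
    = if k < m then (MvPolynomial.X k : R) else 0 := by
  simp [pim]

def Phi (n m : ℕ) : P n →+* P n := MvPolynomial.map (pim m)

lemma Phi_dm (n m : ℕ) (i : Fin n) (k : ℕ) (hk : k ≤ m) :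
    Phi n m (dm n i k) = dm n i k := by
  rw [Phi, dm, map_prod]
  apply Finset.prod_congr rfl
  intro j hj
  have hjm : j < m := lt_of_lt_of_le (Finset.mem_range.mp hj) hk
  rw [map_add, MvPolynomial.map_X, MvPolynomial.map_C, pim_X, if_pos hjm]

lemma Phi_aPoly (n m : ℕ) (ν : Fin n → ℕ) (hν : ∀ i, ν i ≤ m) :
    Phi n m (aPoly n ν) = aPoly n ν := by
  rw [aPoly, map_sum]
  apply Finset.sum_congr rfl
  intro σ _
  rw [map_zsmul, map_prod]
  apply congrArg
  apply Finset.prod_congr rfl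
  intro i _
  exact Phi_dm n m (σ i) (ν i) (hν i)

lemma Phi_smul (n m : ℕ) (r : R) (f : P n) :
    Phi n m (r • f) = pim m r • Phi n m f := by
  rw [MvPolynomial.smul_eq_C_mul, map_mul, Phi, MvPolynomial.map_C,
    ← MvPolynomial.smul_eq_C_mul]

lemma sub_pim_mem (m : ℕ) (r : R) :
    r - pim m r ∈ Ideal.span {q : R | ∃ k : ℕ, m ≤ k ∧ q = MvPolynomial.X k} := by
  induction r using MvPolynomial.induction_on with
  | C a => rw [pim]; simp
  | add p q hp hq =>
    have : p + q - pim m (p + q) = (p - pim m p) + (q - pim m q) := by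
      rw [map_add]; ring
    rw [this]
    exact Ideal.add_mem _ hp hq
  | mul_X p k hp =>
    have : p * MvPolynomial.X k - pim m (p * MvPolynomial.X k)
        = (p - pim m p) * MvPolynomial.X k
          + pim m p * (MvPolynomial.X k - pim m (MvPolynomial.X k)) := by
      rw [map_mul]; ring
    rw [this]
    apply Ideal.add_mem
    · exact Ideal.mul_mem_right _ _ hp
    · apply Ideal.mul_mem_left
      rw [pim_X]
      by_cases hk : k < m
      · rw [if_pos hk, sub_self]
        exact Ideal.zero_mem _
      · rw [if_neg hk, sub_zero]
        exact Ideal.subset_span ⟨k, le_of_not_gt hk, rfl⟩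

lemma ker_pim {m : ℕ} {r : R} (hr : pim m r = 0) :
    r ∈ Ideal.span {q : R | ∃ k : ℕ, m ≤ k ∧ q = MvPolynomial.X k} := by
  have := sub_pim_mem m r
  rwa [hr, sub_zero] at this

lemma root_injective (m N : ℕ) :
    Function.Injective (fun k₀ : Fin m =>
      (MvPolynomial.C (-(MvPolynomial.X (k₀ : ℕ) : R)) : MvPolynomial (Fin N) R)) := by
  intro a b hab
  simp only at hab
  have h1 := MvPolynomial.C_injective _ R hab
  have h2 := neg_injective h1
  exact Fin.val_injective (MvPolynomial.X_injective h2)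

lemma vanish (m : ℕ) (hm : 0 < m) : ∀ (N : ℕ) (h : MvPolynomial (Fin N) R),
    (∀ i, MvPolynomial.degreeOf i h < m) →
    (∀ k : Fin N → Fin m, eval (fun i => -(MvPolynomial.X ((k i : ℕ)) : R)) h = 0) →
    h = 0 := by
  intro N
  induction N with
  | zero =>
    intro h hdeg hev
    obtain ⟨r, rfl⟩ := MvPolynomial.C_surjective (Fin 0) h
    have h0 := hev (fun i => i.elim0)
    rw [eval_C] at h0
    rw [h0, map_zero]
  | succ N ih =>
    intro h hdeg hev
    set e := finSuccEquiv R N h with he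
    have hroot : ∀ k₀ : Fin m,
        Polynomial.eval (MvPolynomial.C (-(MvPolynomial.X ((k₀ : ℕ)) : R))) e = 0 := by
      intro k₀
      apply ih
      · intro i
        rw [MvPolynomial.degreeOf_lt_iff hm]
        intro β hβ
        have hc := MvPolynomial.mem_support_iff.mp hβ
        rw [Polynomial.eval_eq_sum_range, MvPolynomial.coeff_sum] at hc
        obtain ⟨d, -, hd⟩ := Finset.exists_ne_zero_of_sum_ne_zero hc
        rw [← map_pow, mul_comm, MvPolynomial.coeff_C_mul] at hd
        have hβsupp : β ∈ (e.coeff d).support := by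
          rw [MvPolynomial.mem_support_iff]
          intro hz
          rw [hz, mul_zero] at hd
          exact hd rfl
        have hdegle : MvPolynomial.degreeOf i (e.coeff d) < m :=
          lt_of_le_of_lt (degreeOf_coeff_finSuccEquiv h i d) (hdeg i.succ)
        exact (MvPolynomial.degreeOf_lt_iff hm).mp hdegle β hβsupp
      · intro k
        set s : Fin N → R := fun i => -(MvPolynomial.X ((k i : ℕ)) : R) with hs
        have h1 : (eval s) (Polynomial.eval (MvPolynomial.C (-(MvPolynomial.X ((k₀ : ℕ)) : R))) e)
            = Polynomial.eval ((eval s) (MvPolynomial.C (-(MvPolynomial.X ((k₀ : ℕ)) : R))))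
                (e.map (eval s)) := by
          rw [← Polynomial.eval₂_at_apply, Polynomial.eval₂_eq_eval_map]
        rw [h1, eval_C]
        have h2 := eval_eq_eval_mv_eval' s (-(MvPolynomial.X ((k₀ : ℕ)) : R)) h
        rw [← he] at h2
        rw [← h2]
        have h3 := hev (Fin.cons k₀ k)
        have h4 : (fun i => -(MvPolynomial.X (((Fin.cons k₀ k : Fin (N+1) → Fin m) i : ℕ)) : R))
            = Fin.cons (-(MvPolynomial.X ((k₀ : ℕ)) : R)) s := by
          funext i
          refine Fin.cases ?_ ?_ i
          · simp [hs]
          · intro j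
            simp [hs]
        rw [h4] at h3
        exact h3
    have hdeg' : e.natDegree < m := by
      rw [he, natDegree_finSuccEquiv]
      exact hdeg 0
    have he0 : e = 0 :=
      Polynomial.eq_zero_of_natDegree_lt_card_of_eval_eq_zero e (root_injective m N)
        hroot (by simpa using hdeg')
    have : finSuccEquiv R N h = 0 := by rw [← he]; exact he0
    simpa using (map_eq_zero_iff _ (finSuccEquiv R N).injective).mp this

lemma dm_split (n : ℕ) (i : Fin n) {m k : ℕ} (hmk : m ≤ k) :
    ∃ q : P n, dm n i k = dm n i m * q := by
  obtain ⟨r, rfl⟩ := Nat.exists_eq_add_of_le hmk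
  exact ⟨_, by rw [dm, Finset.prod_range_add]; rfl⟩

lemma aPoly_mem_Jm (n m : ℕ) (hn : 1 ≤ n) (ν : Fin n → ℕ) (hν : m ≤ ν ⟨0, hn⟩) :
    aPoly n ν ∈ Jm n m := by
  rw [aPoly]
  apply Submodule.sum_mem
  intro σ _
  have hgen : dm n (σ ⟨0, hn⟩) m ∈ Jm n m :=
    Ideal.subset_span (Set.mem_union_right _ ⟨σ ⟨0, hn⟩, rfl⟩)
  obtain ⟨q, hq⟩ := dm_split n (σ ⟨0, hn⟩) hν
  have hmem : (∏ i : Fin n, dm n (σ i) (ν i)) ∈ Jm n m := by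
    rw [← Finset.mul_prod_erase Finset.univ _ (Finset.mem_univ ⟨0, hn⟩), hq, mul_assoc]
    exact Ideal.mul_mem_right _ _ hgen
  have := Ideal.mul_mem_left (Jm n m) (((Equiv.Perm.sign σ : ℤ) : P n)) hmem
  rwa [← zsmul_eq_mul] at this

lemma smul_aPoly_mem_Jm (n m : ℕ) {k : ℕ} (hk : m ≤ k) (ν : Fin n → ℕ) :
    (MvPolynomial.X k : R) • aPoly n ν ∈ Jm n m := by
  rw [MvPolynomial.smul_eq_C_mul]
  exact Ideal.mul_mem_right _ _ (Ideal.subset_span (Set.mem_union_left _ ⟨k, hk, rfl⟩))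

def skewSub (n : ℕ) : Submodule R (P n) where
  carrier := {f | IsSkew n f}
  add_mem' := fun hf hg => isSkew_add hf hg
  zero_mem' := isSkew_zero n
  smul_mem' := fun r f hf => isSkew_smul hf r

lemma Phi_Jm (n m : ℕ) {f : P n} (hf : f ∈ Jm n m) :
    Phi n m f ∈ Ideal.span {p : P n | ∃ i : Fin n, p = dm n i m} := by
  refine Submodule.span_induction ?_ ?_ ?_ ?_ hf
  · rintro x (⟨k, hk, rfl⟩ | ⟨i, rfl⟩)
    · have : Phi n m (C (MvPolynomial.X k : R)) = 0 := by
        rw [Phi, MvPolynomial.map_C, pim_X, if_neg (not_lt.mpr hk), map_zero]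
      rw [this]
      exact Ideal.zero_mem _
    · rw [Phi_dm n m i m le_rfl]
      exact Ideal.subset_span ⟨i, rfl⟩
  · rw [map_zero]; exact Ideal.zero_mem _
  · intro x y _ _ hx hy
    rw [map_add]; exact Ideal.add_mem _ hx hy
  · intro a x _ hx
    rw [smul_eq_mul, map_mul]
    exact Ideal.mul_mem_left _ _ hx

lemma eval_dm_zero (n m : ℕ) (k : Fin n → Fin m) (i : Fin n) :
    eval (fun j => -(MvPolynomial.X ((k j : ℕ)) : R)) (dm n i m) = 0 := by
  rw [dm, map_prod]
  apply Finset.prod_eq_zero (Finset.mem_range.mpr (k i).isLt)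
  rw [map_add, eval_X, eval_C]
  ring

/-- the intersection of `J_m` with the module of skew-symmetric
polynomials is the `R`-span of the elements `t_k • a_ν` (`k > m`, i.e. 0-indexed
index `≥ m`, and `ν` strictly decreasing) together with the `a_ν` for `ν`
strictly decreasing with `ν₁ ≥ m`. -/
theorem stmt_8 (n m : ℕ) (hn : 1 ≤ n) (hm : n ≤ m) :
    {f : P n | f ∈ Jm n m ∧ IsSkew n f} =
      (Submodule.span R
        ({p : P n | ∃ k : ℕ, m ≤ k ∧ ∃ ν : Fin n → ℕ, StrictAnti ν ∧
            p = (MvPolynomial.X k : R) • aPoly n ν} ∪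
         {p : P n | ∃ ν : Fin n → ℕ, StrictAnti ν ∧ m ≤ ν ⟨0, hn⟩ ∧
            p = aPoly n ν}) : Set (P n)) := by
  classical
  have hm' : 0 < m := lt_of_lt_of_le hn hm
  set A : Set (P n) := {p : P n | ∃ k : ℕ, m ≤ k ∧ ∃ ν : Fin n → ℕ, StrictAnti ν ∧
      p = (MvPolynomial.X k : R) • aPoly n ν} with hA
  set B : Set (P n) := {p : P n | ∃ ν : Fin n → ℕ, StrictAnti ν ∧ m ≤ ν ⟨0, hn⟩ ∧
      p = aPoly n ν} with hB
  apply Set.eq_of_subset_of_subset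
  · -- hard direction
    rintro f ⟨hfJ, hfskew⟩
    show f ∈ Submodule.span R (A ∪ B)
    obtain ⟨s, c, hs1, -, hs3⟩ := expansion_aux n (Mf n f) f rfl hfskew
    set s₁ := s.filter (fun ν => m ≤ ν ⟨0, hn⟩) with hs₁
    set s₂ := s.filter (fun ν => ¬ m ≤ ν ⟨0, hn⟩) with hs₂
    have hsplit : f = (∑ ν ∈ s₁, c ν • aPoly n ν) + ∑ ν ∈ s₂, c ν • aPoly n ν := by
      rw [hs3, ← Finset.sum_filter_add_sum_filter_not s (fun ν => m ≤ ν ⟨0, hn⟩)]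
    set f₁ := ∑ ν ∈ s₁, c ν • aPoly n ν with hf₁
    set g := ∑ ν ∈ s₂, c ν • aPoly n ν with hg
    have hf₁span : f₁ ∈ Submodule.span R (A ∪ B) := by
      apply Submodule.sum_mem
      intro ν hν
      rw [hs₁, Finset.mem_filter] at hν
      exact Submodule.smul_mem _ _ (Submodule.subset_span
        (Set.mem_union_right _ ⟨ν, hs1 ν hν.1, hν.2, rfl⟩))
    have hf₁J : f₁ ∈ Jm n m := by
      apply Submodule.sum_mem
      intro ν hν
      rw [hs₁, Finset.mem_filter] at hν
      rw [MvPolynomial.smul_eq_C_mul]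
      exact Ideal.mul_mem_left _ _ (aPoly_mem_Jm n m hn ν hν.2)
    have hgJ : g ∈ Jm n m := by
      have hgeq : g = f - f₁ := by rw [hsplit]; ring
      rw [hgeq]
      exact Submodule.sub_mem _ hfJ hf₁J
    have hentry : ∀ ν ∈ s₂, ∀ i, ν i < m := by
      intro ν hν i
      rw [hs₂, Finset.mem_filter] at hν
      have hanti := hs1 ν hν.1
      have h1 : ν i ≤ ν ⟨0, hn⟩ := hanti.antitone (Fin.le_def.mpr (Nat.zero_le _))
      have h2 := hν.2
      omega
    have hPhig_eq : Phi n m g = ∑ ν ∈ s₂, pim m (c ν) • aPoly n ν := by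
      rw [hg, map_sum]
      apply Finset.sum_congr rfl
      intro ν hν
      rw [Phi_smul, Phi_aPoly n m ν (fun i => le_of_lt (hentry ν hν i))]
    have hdeg : ∀ i, MvPolynomial.degreeOf i (Phi n m g) < m := by
      intro i
      rw [MvPolynomial.degreeOf_lt_iff hm']
      intro β hβ
      have hcβ := MvPolynomial.mem_support_iff.mp hβ
      rw [hPhig_eq, MvPolynomial.coeff_sum] at hcβ
      obtain ⟨ν, hν, hνne⟩ := Finset.exists_ne_zero_of_sum_ne_zero hcβ
      rw [MvPolynomial.coeff_smul] at hνne
      have haβ : β ∈ (aPoly n ν).support := by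
        rw [MvPolynomial.mem_support_iff]
        intro hz; rw [hz, smul_zero] at hνne; exact hνne rfl
      obtain ⟨σ, hσ⟩ := support_aPoly_exists_perm ν β haβ
      have := hσ (σ⁻¹ i)
      rw [← Equiv.Perm.mul_apply, mul_inv_cancel, Equiv.Perm.one_apply] at this
      exact lt_of_le_of_lt this (hentry ν hν _)
    have hev : ∀ k : Fin n → Fin m,
        eval (fun i => -(MvPolynomial.X ((k i : ℕ)) : R)) (Phi n m g) = 0 := by
      intro k
      have hker : Ideal.span {p : P n | ∃ i : Fin n, p = dm n i m}
          ≤ RingHom.ker (eval (fun i => -(MvPolynomial.X ((k i : ℕ)) : R)) :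
              P n →+* R) := by
        rw [Ideal.span_le]
        rintro p ⟨i, rfl⟩
        exact eval_dm_zero n m k i
      exact hker (Phi_Jm n m hgJ)
    have hPhig0 : Phi n m g = 0 := vanish m hm' n (Phi n m g) hdeg hev
    have hanti₂ : ∀ ν ∈ s₂, StrictAnti ν := by
      intro ν hν
      rw [hs₂, Finset.mem_filter] at hν
      exact hs1 ν hν.1
    have hpimc : ∀ ν ∈ s₂, pim m (c ν) = 0 :=
      aPoly_indep (fun ν => pim m (c ν)) s₂ hanti₂ (by rw [← hPhig_eq]; exact hPhig0)
    have hterm : ∀ ν ∈ s₂, c ν • aPoly n ν ∈ Submodule.span R (A ∪ B) := by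
      intro ν hν
      have hker := ker_pim (hpimc ν hν)
      refine Submodule.span_induction ?_ ?_ ?_ ?_ hker
      · rintro r ⟨k, hk, rfl⟩
        exact Submodule.subset_span (Set.mem_union_left _ ⟨k, hk, ν, hanti₂ ν hν, rfl⟩)
      · rw [zero_smul]; exact Submodule.zero_mem _
      · intro x y _ _ hx hy
        rw [add_smul]; exact Submodule.add_mem _ hx hy
      · intro a x _ hx
        rw [smul_eq_mul, mul_smul]
        exact Submodule.smul_mem _ _ hx
    have hgspan : g ∈ Submodule.span R (A ∪ B) := by
      rw [hg]
      exact Submodule.sum_mem _ hterm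
    rw [hsplit]
    exact Submodule.add_mem _ hf₁span hgspan
  · -- easy direction
    intro f hf
    have hle : Submodule.span R (A ∪ B)
        ≤ (Submodule.restrictScalars R (Jm n m)) ⊓ skewSub n := by
      rw [Submodule.span_le]
      rintro p (⟨k, hk, ν, hanti, rfl⟩ | ⟨ν, hanti, hge, rfl⟩)
      · exact ⟨smul_aPoly_mem_Jm n m hk ν, isSkew_smul (isSkew_aPoly n ν) _⟩
      · exact ⟨aPoly_mem_Jm n m hn ν hge, isSkew_aPoly n ν⟩
    have := hle hf
    exact ⟨this.1, this.2⟩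

end
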